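/- Let p > 2 be a prime and f(x) = x⁴ + a x² + b x + c ∈ ℤ[x]. Then f(x) modulo p is the square of an irreducible quadratic polynomial in 𝔽_p[x] if and only if p ∣ b, p ∤ ac, a² ≡ 4c (mod p), and −a/2 is a quadratic nonresidue modulo p. -/
import Mathlib


open Polynomial

lemma quad_form {R : Type*} [CommRing R] (g : R[X]) (h : g.natDegree ≤ 2) :
    g = C (g.coeff 2) * X ^ 2 + C (g.coeff 1) * X + C (g.coeff 0) := by
  ext n
  rcases n with _ | _ | _ | n
  · simp [coeff_C]
  · simp [coeff_C]
  · simp [coeff_C]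
  · rw [coeff_eq_zero_of_natDegree_lt (lt_of_le_of_lt h (by omega))]
    simp [coeff_C, coeff_X, coeff_X_pow]

/-- for an odd prime p, f = x⁴ + ax² + bx + c reduces mod p to the square
of an irreducible quadratic iff p ∣ b, p ∤ ac, a² ≡ 4c (mod p), and −a/2 is a quadratic
nonresidue mod p (no u with 2u² = −a in 𝔽_p). -/
theorem stmt3 (p : ℕ) (hp : p.Prime) (hp2 : 2 < p) (a b c : ℤ) (f : Polynomial ℤ)
    (hf : f = X ^ 4 + C a * X ^ 2 + C b * X + C c) :
    (∃ g : Polynomial (ZMod p), Irreducible g ∧ g.natDegree = 2 ∧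
      f.map (Int.castRingHom (ZMod p)) = g ^ 2) ↔
    ((p : ℤ) ∣ b ∧ ¬ (p : ℤ) ∣ (a * c) ∧ (a : ZMod p) ^ 2 = 4 * (c : ZMod p) ∧
      ¬ ∃ u : ZMod p, 2 * u ^ 2 = -(a : ZMod p)) := by
  haveI : Fact p.Prime := ⟨hp⟩
  have h2 : (2 : ZMod p) ≠ 0 := by
    intro h
    have h' : ((2 : ℕ) : ZMod p) = 0 := by exact_mod_cast h
    rw [ZMod.natCast_eq_zero_iff] at h'
    have := Nat.le_of_dvd (by norm_num) h'
    omega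
  have hmap : f.map (Int.castRingHom (ZMod p)) =
      X ^ 4 + C (a : ZMod p) * X ^ 2 + C (b : ZMod p) * X + C (c : ZMod p) := by
    subst hf
    simp [Polynomial.map_add, Polynomial.map_mul, Polynomial.map_pow]
  constructor
  · rintro ⟨g, hirr, hdeg, heq⟩
    set l := g.coeff 2 with hl
    set s := g.coeff 1 with hs
    set t := g.coeff 0 with ht
    have hg : g = C l * X ^ 2 + C s * X + C t := quad_form g (le_of_eq hdeg)
    have hg2 : g ^ 2 = C (l*l) * X ^ 4 + C (2*(l*s)) * X ^ 3 + C (2*(l*t) + s*s) * X ^ 2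
        + C (2*(s*t)) * X + C (t*t) := by
      rw [hg]; simp only [C_add, C_mul, map_ofNat]; ring
    set A := (a : ZMod p) with hA
    set B := (b : ZMod p) with hB
    set D := (c : ZMod p) with hD
    rw [hmap, hg2] at heq
    have e4 := congrArg (fun q => coeff q 4) heq
    have e3 := congrArg (fun q => coeff q 3) heq
    have e2 := congrArg (fun q => coeff q 2) heq
    have e1 := congrArg (fun q => coeff q 1) heq
    have e0 := congrArg (fun q => coeff q 0) heq
    simp only [coeff_add, coeff_C_mul, coeff_X_pow, coeff_X, coeff_C] at e4 e3 e2 e1 e0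
    norm_num at e4 e3 e2 e1 e0
    -- e4 : 1 = l*l, e3 : 0 = 2*(l*s), e2 : a = 2*(l*t)+s*s, e1 : b = 2*(s*t), e0 : c = t*t
    have hlne : l ≠ 0 := by
      intro h0; rw [h0] at e4; simp at e4
    have hs0 : s = 0 := by
      rcases e3 with h | h | h
      · exact absurd h h2
      · exact absurd h hlne
      · exact h
    rw [hs0] at e2 e1
    simp at e2 e1
    -- e2 : a = 2*(l*t), e1 : b = 0, e0 : c = t*t
    have ht0 : t ≠ 0 := by
      intro h0
      rw [h0, hs0] at hg
      simp at hg
      have : ¬ Irreducible g := by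
        rw [hg]
        intro hI
        rcases hI.isUnit_or_isUnit (show C l * X ^ 2 = (C l * X) * X by ring) with h | h
        · have := natDegree_eq_zero_of_isUnit h
          rw [natDegree_C_mul hlne, natDegree_X] at this
          exact one_ne_zero this
        · exact Polynomial.not_isUnit_X h
      exact this hirr
    refine ⟨?_, ?_, ?_, ?_⟩
    · rwa [← ZMod.intCast_zmod_eq_zero_iff_dvd]
    · rw [← ZMod.intCast_zmod_eq_zero_iff_dvd]
      push_cast
      show ¬ A * D = 0
      rw [e2, e0]
      intro h
      rcases mul_eq_zero.mp h with h | h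
      · rcases mul_eq_zero.mp h with h | h
        · exact h2 h
        · rcases mul_eq_zero.mp h with h | h
          · exact hlne h
          · exact ht0 h
      · exact ht0 (mul_self_eq_zero.mp h)
    · show A ^ 2 = 4 * D
      linear_combination (A + 2 * l * t) * e2 - 4 * e0 - 4 * t ^ 2 * e4
    · rintro ⟨u, hu⟩
      have hl2 : l * l = 1 := e4.symm
      have key : (2 : ZMod p) * (l * u ^ 2 + t) = 0 := by
        linear_combination l * hu - l * e2 - 2 * t * hl2
      have key2 : l * u ^ 2 + t = 0 := by
        rcases mul_eq_zero.mp key with h | h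
        · exact absurd h h2
        · exact h
      have hroot : g.eval u = 0 := by
        rw [hg, hs0]
        simp
        linear_combination key2
      have hroots : g.roots = 0 :=
        (irreducible_iff_roots_eq_zero_of_degree_le_three (by omega) (by omega)).mp hirr
      have : u ∈ g.roots := by
        rw [mem_roots (by intro h0; rw [h0] at hdeg; simp at hdeg)]
        exact hroot
      rw [hroots] at this
      simp at this
  · rintro ⟨hb, hac, hsq, hnr⟩
    have hb0 : (b : ZMod p) = 0 := (ZMod.intCast_zmod_eq_zero_iff_dvd b p).mpr hb
    set t := (a : ZMod p) / 2 with htdef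
    have h2t : 2 * t = (a : ZMod p) := by
      rw [htdef]; field_simp
    have h4 : (4 : ZMod p) ≠ 0 := by
      have : (4 : ZMod p) = 2 * 2 := by norm_num
      rw [this]; exact mul_ne_zero h2 h2
    have ht2 : t * t = (c : ZMod p) := by
      have h1 : (4 : ZMod p) * (t * t) = 4 * (c : ZMod p) := by
        have : (2 * t) * (2 * t) = 4 * (c : ZMod p) := by
          rw [h2t]; linear_combination hsq
        linear_combination this
      exact mul_left_cancel₀ h4 h1
    have hne : (X ^ 2 + C t : (ZMod p)[X]) ≠ 0 := X_pow_add_C_ne_zero (by norm_num) t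
    have hdeg : (X ^ 2 + C t : (ZMod p)[X]).natDegree = 2 := natDegree_X_pow_add_C
    refine ⟨X ^ 2 + C t, ?_, hdeg, ?_⟩
    · rw [irreducible_iff_roots_eq_zero_of_degree_le_three (by omega) (by omega)]
      rw [Multiset.eq_zero_iff_forall_notMem]
      intro u hu
      rw [mem_roots hne] at hu
      have hu' : u ^ 2 + t = 0 := by
        simpa using hu
      exact hnr ⟨u, by linear_combination 2 * hu' - h2t⟩
    · rw [hmap, hb0]
      have expand : (X ^ 2 + C t : (ZMod p)[X]) ^ 2
          = X ^ 4 + C (2 * t) * X ^ 2 + C (t * t) := by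
        simp only [C_mul, map_ofNat]; ring
      rw [expand, h2t, ht2]
      simp
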